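/- For a matrix Λ ∈ SO₀(1,2), the wedge is mapped into itself, Λ·W₁ ⊆ W₁, if and only if Λ = Λ₁(t) for some t ∈ ℝ. In particular, the only elements of SO₀(1,2) leaving W₁ invariant are the boosts Λ₁(t). -/

import Mathlib

/-- The Minkowski form `⟨x,y⟩ = x₀y₀ − x₁y₁ − x₂y₂` on `ℝ³`. -/
def mink (x y : Fin 3 → ℝ) : ℝ := x 0 * y 0 - x 1 * y 1 - x 2 * y 2

/-- The two-dimensional de Sitter space `dS = {x ∈ ℝ³ : ⟨x,x⟩ = −r²}`. -/
def deSitter (r : ℝ) : Set (Fin 3 → ℝ) := {x | mink x x = -r ^ 2}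

/-- Two points are spacelike separated if `⟨x−y, x−y⟩ < 0`. -/
def SpacelikeSep (x y : Fin 3 → ℝ) : Prop := mink (x - y) (x - y) < 0

/-- The causal complement `X′ = {y ∈ dS : y spacelike separated from every x ∈ X}`. -/
def causalCompl (r : ℝ) (X : Set (Fin 3 → ℝ)) : Set (Fin 3 → ℝ) :=
  {y | y ∈ deSitter r ∧ ∀ x ∈ X, SpacelikeSep x y}

/-- The wedge `W₁ = {x ∈ dS : x₂ > |x₀|}`. -/
def wedge1 (r : ℝ) : Set (Fin 3 → ℝ) := {x | x ∈ deSitter r ∧ |x 0| < x 2}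

/-- The rotation `R₀(α)`. -/
noncomputable def rot (α : ℝ) : Matrix (Fin 3) (Fin 3) ℝ :=
  !![1, 0, 0; 0, Real.cos α, -Real.sin α; 0, Real.sin α, Real.cos α]

/-- The boost `Λ₁(t)`. -/
noncomputable def boost (t : ℝ) : Matrix (Fin 3) (Fin 3) ℝ :=
  !![Real.cosh t, 0, Real.sinh t; 0, 1, 0; Real.sinh t, 0, Real.cosh t]

/-- The Minkowski metric matrix `η = diag(1,−1,−1)`. -/
def minkMatrix : Matrix (Fin 3) (Fin 3) ℝ := !![1, 0, 0; 0, -1, 0; 0, 0, -1]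

/-- `SO₀(1,2)`: real 3×3 matrices with `ΛᵀηΛ = η`, `det Λ = 1`, `Λ₀₀ > 0`. -/
def SOplus : Set (Matrix (Fin 3) (Fin 3) ℝ) :=
  {Λ | Λ.transpose * minkMatrix * Λ = minkMatrix ∧ Λ.det = 1 ∧ 0 < Λ 0 0}


lemma key_lemma (w0 w1 w2 : ℝ) (hl : w0^2 - w1^2 - w2^2 = 0)
    (h : ∀ u : ℝ, Real.sinh u * w0 < Real.cosh u * w2) :
    w1 = 0 ∧ w2 = |w0| ∧ 0 < w2 := by
  have h2 : 0 < w2 := by have := h 0; simpa using this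
  have hsq : w0 ^ 2 ≤ w2 ^ 2 := by
    by_contra hc
    push_neg at hc
    have hd : 0 < w0 ^ 2 - w2 ^ 2 := by linarith
    set q : ℝ := w2 ^ 2 / (w0 ^ 2 - w2 ^ 2) with hq
    have hq0 : 0 ≤ q := by positivity
    set T : ℝ := Real.sqrt q + 1 with hT
    have hT0 : 0 < T := by positivity
    have hTsq : q < T ^ 2 := by
      have hs : Real.sqrt q ^ 2 = q := Real.sq_sqrt hq0
      nlinarith [Real.sqrt_nonneg q]
    have hw0 : w0 ≠ 0 := by intro h0; rw [h0] at hc; nlinarith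
    set S : ℝ := if 0 < w0 then T else -T with hS
    have hSw : S * w0 = T * |w0| := by
      rcases lt_trichotomy 0 w0 with h' | h' | h'
      · rw [hS, if_pos h', abs_of_pos h']
      · exact absurd h'.symm hw0
      · rw [hS, if_neg (by linarith), abs_of_neg h']; ring
    have hu := h (Real.arsinh S)
    rw [Real.sinh_arsinh, Real.cosh_arsinh, hSw] at hu
    have hS2 : S ^ 2 = T ^ 2 := by rcases le_or_gt 0 w0 with h' | h' <;> simp [hS]
    have hc2 : Real.sqrt (1 + S ^ 2) ^ 2 = 1 + S ^ 2 := Real.sq_sqrt (by positivity)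
    have hlhs : 0 < T * |w0| := by positivity
    have hsqr : (T * |w0|) ^ 2 < (Real.sqrt (1 + S ^ 2) * w2) ^ 2 := by
      apply pow_lt_pow_left₀ hu (le_of_lt hlhs)
      norm_num
    rw [mul_pow, mul_pow, hc2, sq_abs, hS2] at hsqr
    -- T^2 * w0^2 < (1 + T^2) * w2^2  →  T^2 (w0^2 - w2^2) < w2^2, but T^2 > q
    have : q * (w0 ^ 2 - w2 ^ 2) = w2 ^ 2 := by rw [hq, div_mul_cancel₀ _ hd.ne']
    nlinarith
  have hw1 : w1 = 0 := by nlinarith [sq_nonneg w1]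
  refine ⟨hw1, ?_, h2⟩
  have : w2 ^ 2 = w0 ^ 2 := by nlinarith
  rw [← Real.sqrt_sq h2.le, this, Real.sqrt_sq_eq_abs]


lemma boost_maps (r t : ℝ) : (fun x => (boost t).mulVec x) '' wedge1 r ⊆ wedge1 r := by
  rintro y ⟨x, ⟨hdS, hw⟩, rfl⟩
  simp only [wedge1, deSitter, mink, Set.mem_setOf_eq] at hdS ⊢
  rw [abs_lt] at hw ⊢
  simp only [Matrix.mulVec, dotProduct, Fin.sum_univ_three, boost]
  norm_num [Matrix.cons_val_two]
  have h1 := Real.cosh_sq_sub_sinh_sq t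
  have h2 := Real.exp_pos t
  have h3 := Real.exp_pos (-t)
  have h4 := Real.cosh_add_sinh t
  have h5 := Real.cosh_sub_sinh t
  constructor
  · nlinarith
  constructor <;> nlinarith

set_option maxHeartbeats 1000000 in
lemma aux_hard (r : ℝ) (hr : 0 < r) (Λ : Matrix (Fin 3) (Fin 3) ℝ)
    (hη : Λ.transpose * minkMatrix * Λ = minkMatrix) (hdet : Λ.det = 1) (hpos : 0 < Λ 0 0)
    (hW : (fun x => Λ.mulVec x) '' wedge1 r ⊆ wedge1 r) : ∃ t, Λ = boost t := by
  -- η² = 1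
  have hηη : minkMatrix * minkMatrix = 1 := by
    rw [minkMatrix, Matrix.mul_fin_three, Matrix.one_fin_three]; norm_num
  -- Λ η Λᵀ = η
  have hBΛ : (minkMatrix * Λ.transpose * minkMatrix) * Λ = 1 := by
    have h1 : minkMatrix * (Λ.transpose * minkMatrix * Λ) = 1 := by rw [hη, hηη]
    rw [← h1]; noncomm_ring
  have hΛB : Λ * (minkMatrix * Λ.transpose * minkMatrix) = 1 := mul_eq_one_comm.mpr hBΛ
  have hη2 : Λ * minkMatrix * Λ.transpose = minkMatrix := by
    have h2 : (Λ * (minkMatrix * Λ.transpose * minkMatrix)) * minkMatrix = minkMatrix := by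
      rw [hΛB, Matrix.one_mul]
    calc Λ * minkMatrix * Λ.transpose
        = Λ * minkMatrix * Λ.transpose * (minkMatrix * minkMatrix) := by
          rw [hηη, Matrix.mul_one]
      _ = (Λ * (minkMatrix * Λ.transpose * minkMatrix)) * minkMatrix := by noncomm_ring
      _ = minkMatrix := h2
  -- row relations
  have row : ∀ i j : Fin 3, (Λ * minkMatrix * Λ.transpose) i j
      = Λ i 0 * Λ j 0 - Λ i 1 * Λ j 1 - Λ i 2 * Λ j 2 := by
    intro i j
    simp [Matrix.mul_apply, Fin.sum_univ_three, minkMatrix, Matrix.transpose_apply]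
    ring
  have h00 : Λ 0 0 * Λ 0 0 - Λ 0 1 * Λ 0 1 - Λ 0 2 * Λ 0 2 = 1 := by
    have := congrFun (congrFun hη2 0) 0; rw [row] at this; rw [this]; norm_num [minkMatrix]
  have h22 : Λ 2 0 * Λ 2 0 - Λ 2 1 * Λ 2 1 - Λ 2 2 * Λ 2 2 = -1 := by
    have := congrFun (congrFun hη2 2) 2; rw [row] at this; rw [this]; norm_num [minkMatrix, Matrix.cons_val_two]
  have h02 : Λ 0 0 * Λ 2 0 - Λ 0 1 * Λ 2 1 - Λ 0 2 * Λ 2 2 = 0 := by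
    have := congrFun (congrFun hη2 0) 2; rw [row] at this; rw [this]; norm_num [minkMatrix, Matrix.cons_val_two]
  have h11 : Λ 1 0 * Λ 1 0 - Λ 1 1 * Λ 1 1 - Λ 1 2 * Λ 1 2 = -1 := by
    have := congrFun (congrFun hη2 1) 1; rw [row] at this; rw [this]; norm_num [minkMatrix]
  have h01 : Λ 0 0 * Λ 1 0 - Λ 0 1 * Λ 1 1 - Λ 0 2 * Λ 1 2 = 0 := by
    have := congrFun (congrFun hη2 0) 1; rw [row] at this; rw [this]; norm_num [minkMatrix]
  have h21 : Λ 2 0 * Λ 1 0 - Λ 2 1 * Λ 1 1 - Λ 2 2 * Λ 1 2 = 0 := by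
    have := congrFun (congrFun hη2 2) 1; rw [row] at this; rw [this]; norm_num [minkMatrix, Matrix.cons_val_two]
  -- test curve
  have hcurve : ∀ u : ℝ,
      |Λ 0 0 * (r * Real.sinh u) + Λ 0 1 * 0 + Λ 0 2 * (r * Real.cosh u)| <
        Λ 2 0 * (r * Real.sinh u) + Λ 2 1 * 0 + Λ 2 2 * (r * Real.cosh u) := by
    intro u
    have hx : (![r * Real.sinh u, 0, r * Real.cosh u] : Fin 3 → ℝ) ∈ wedge1 r := by
      constructor
      · show mink _ _ = _
        simp [mink]
        nlinarith [Real.cosh_sq u]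
      · show |r * Real.sinh u| < r * Real.cosh u
        rw [abs_lt]
        constructor <;> nlinarith [Real.sinh_lt_cosh u, Real.sinh_lt_cosh (-u),
          Real.sinh_neg u, Real.cosh_neg u]
    have := hW ⟨_, hx, rfl⟩
    obtain ⟨-, habs⟩ := this
    simp only [Matrix.mulVec, dotProduct, Fin.sum_univ_three] at habs
    simp only [Matrix.cons_val_zero, Matrix.cons_val_one, Matrix.head_cons,
      Matrix.cons_val_two, Matrix.tail_cons] at habs
    exact habs
  -- the two lightlike inequalities
  have hk1 : ∀ u : ℝ, Real.sinh u * (Λ 0 0 - Λ 2 0) < Real.cosh u * (Λ 2 2 - Λ 0 2) := by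
    intro u
    have h := hcurve u
    rw [abs_lt] at h
    have h' := h.2
    nlinarith [hr, h']
  have hk2 : ∀ u : ℝ, Real.sinh u * (-(Λ 0 0 + Λ 2 0)) < Real.cosh u * (Λ 2 2 + Λ 0 2) := by
    intro u
    have h := hcurve u
    rw [abs_lt] at h
    have h' := h.1
    nlinarith [hr, h']
  obtain ⟨e1, e2, e3⟩ := key_lemma (Λ 0 0 - Λ 2 0) (Λ 0 1 - Λ 2 1) (Λ 2 2 - Λ 0 2)
    (by linear_combination h00 + h22 - 2 * h02) hk1
  obtain ⟨f1, f2, f3⟩ := key_lemma (-(Λ 0 0 + Λ 2 0)) (Λ 0 1 + Λ 2 1) (Λ 2 2 + Λ 0 2)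
    (by linear_combination h00 + h22 + 2 * h02) hk2
  -- p = q = 0
  have hp : Λ 0 1 = 0 := by linarith
  have hq : Λ 2 1 = 0 := by linarith
  -- squares
  have e2' : (Λ 2 2 - Λ 0 2) ^ 2 = (Λ 0 0 - Λ 2 0) ^ 2 := by
    rw [e2, sq_abs]
  have f2' : (Λ 2 2 + Λ 0 2) ^ 2 = (Λ 0 0 + Λ 2 0) ^ 2 := by
    rw [f2, sq_abs]; ring
  have hd : 0 < Λ 2 2 := by linarith
  simp only [hp, hq] at h00 h22 h02 h01 h21
  have hda : Λ 2 2 ^ 2 = Λ 0 0 ^ 2 := by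
    linear_combination (Λ 0 0 * Λ 2 0 + Λ 0 2 * Λ 2 2) * h02 - Λ 0 0 ^ 2 * h22
      - Λ 2 2 ^ 2 * h00
  have hdeq : Λ 2 2 = Λ 0 0 := by nlinarith [hda, hd, hpos]
  have hceq : Λ 2 0 = Λ 0 2 := by
    have h : Λ 0 0 * Λ 2 0 = Λ 0 0 * Λ 0 2 := by linear_combination h02 + Λ 0 2 * hdeq
    exact mul_left_cancel₀ hpos.ne' h
  rw [hdeq, hceq] at h21
  -- middle row
  have he : Λ 1 0 = 0 := by
    linear_combination Λ 0 0 * h01 - Λ 0 2 * h21 - Λ 1 0 * h00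
  have hg : Λ 1 2 = 0 := by
    linear_combination Λ 0 2 * h01 - Λ 0 0 * h21 - Λ 1 2 * h00
  have hf : Λ 1 1 = 1 := by
    rw [Matrix.det_fin_three, hp, hq, he, hg, hdeq, hceq] at hdet
    linear_combination hdet - Λ 1 1 * h00
  -- conclude
  refine ⟨Real.arsinh (Λ 0 2), ?_⟩
  have ha : Λ 0 0 = Real.cosh (Real.arsinh (Λ 0 2)) := by
    rw [Real.cosh_arsinh]
    rw [show (1 : ℝ) + Λ 0 2 ^ 2 = Λ 0 0 ^ 2 by nlinarith [h00]]
    exact (Real.sqrt_sq hpos.le).symm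
  ext i j
  fin_cases i <;> fin_cases j <;>
    simp [boost, Real.sinh_arsinh, ha, hp, hq, he, hf, hg, hdeq, hceq]


/-- For `Λ ∈ SO₀(1,2)`, the wedge is mapped into itself, `Λ·W₁ ⊆ W₁`, if
and only if `Λ = Λ₁(t)` for some `t ∈ ℝ`. In particular, the only elements of
`SO₀(1,2)` leaving `W₁` invariant are the boosts `Λ₁(t)`. -/
theorem wedge_stabilizer_is_boosts (r : ℝ) (hr : 0 < r)
    (Λ : Matrix (Fin 3) (Fin 3) ℝ) (hΛ : Λ ∈ SOplus) :
    (fun x => Λ.mulVec x) '' wedge1 r ⊆ wedge1 r ↔ ∃ t : ℝ, Λ = boost t := by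
  constructor
  · intro hW
    exact aux_hard r hr Λ hΛ.1 hΛ.2.1 hΛ.2.2 hW
  · rintro ⟨t, rfl⟩
    exact boost_maps r t
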